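/- Let a ≥ 0 and 0 ≤ m < 8/(3√3). Then Ω(a,m) := { b ≥ 0 : sup_{t∈ℝ} |cos(ta) − cos(tb)| ≤ m } equals {a}. -/

import Mathlib

open Real


-- basic numeric facts
lemma sqrt3_facts : 1.7 < Real.sqrt 3 ∧ Real.sqrt 3 < 1.8 := by
  have h := Real.sq_sqrt (by norm_num : (3:ℝ) ≥ 0)
  have h0 := Real.sqrt_nonneg 3
  constructor <;> nlinarith

lemma M_lt : 8 / (3 * Real.sqrt 3) < 1.6 := by
  obtain ⟨h1, h2⟩ := sqrt3_facts
  rw [div_lt_iff₀ (by nlinarith)]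
  nlinarith


lemma irrCase (m r : ℝ) (hirr : Irrational r) (hm : m < 1.6) :
    ∃ s : ℝ, m < |Real.cos s - Real.cos (s * r)| := by
  set S := AddSubgroup.closure ({1, r} : Set ℝ) with hS
  rcases S.dense_or_cyclic with hd | ⟨g, hg⟩
  · obtain ⟨z, hzS, hz⟩ := hd.exists_dist_lt (1/2 : ℝ) (by norm_num : (0:ℝ) < 1/25)
    obtain ⟨k, n, hkn⟩ := AddSubgroup.mem_closure_pair.mp hzS
    simp only [zsmul_eq_mul, mul_one] at hkn
    -- z = k + n * r
    refine ⟨n * (2 * π), ?_⟩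
    have hc1 : Real.cos ((n:ℝ) * (2 * π)) = 1 := Real.cos_int_mul_two_pi n
    set ε : ℝ := z - 1/2 with hε
    have hεabs : |ε| < 1/25 := by
      have := hz; rw [Real.dist_eq, abs_sub_comm] at this; simpa [hε] using this
    have harg : (n:ℝ) * (2 * π) * r = π + 2 * π * ε + ((-k : ℤ) : ℝ) * (2 * π) := by
      have h : (n:ℝ) * r = z - k := by linarith [hkn]
      rw [hε]; push_cast; linear_combination (2 * π) * h
    have hc2 : Real.cos ((n:ℝ) * (2 * π) * r) = -Real.cos (2 * π * ε) := by
      rw [harg, Real.cos_add_int_mul_two_pi]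
      rw [add_comm π, Real.cos_add_pi]
    rw [hc1, hc2]
    have hb : 1 - (2 * π * ε) ^ 2 / 2 ≤ Real.cos (2 * π * ε) :=
      Real.one_sub_sq_div_two_le_cos
    have hπ : π < 3.15 := Real.pi_lt_d2
    have hπ0 : 0 < π := Real.pi_pos
    have hsq : (2 * π * ε) ^ 2 ≤ (2 * 3.15 * (1/25)) ^ 2 := by
      have h1 : |2 * π * ε| ≤ 2 * 3.15 * (1/25) := by
        rw [abs_mul, abs_mul, abs_two, abs_of_pos hπ0]
        nlinarith [abs_nonneg ε]
      calc (2 * π * ε) ^ 2 = |2 * π * ε| ^ 2 := (sq_abs _).symm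
        _ ≤ (2 * 3.15 * (1/25)) ^ 2 := by nlinarith [abs_nonneg (2 * π * ε)]
    rw [abs_of_pos] <;> nlinarith
  · exfalso
    have h1 : (1:ℝ) ∈ S := AddSubgroup.subset_closure (by simp)
    have hr : r ∈ S := AddSubgroup.subset_closure (by simp)
    rw [hg] at h1 hr
    obtain ⟨n, hn⟩ := AddSubgroup.mem_closure_singleton.mp h1
    obtain ⟨k, hk⟩ := AddSubgroup.mem_closure_singleton.mp hr
    simp only [zsmul_eq_mul] at hn hk
    have hn0 : (n:ℝ) ≠ 0 := by
      intro h; rw [h, zero_mul] at hn; exact one_ne_zero hn.symm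
    have : r = (k:ℝ) / (n:ℝ) := by
      field_simp
      calc r * n = (k * g) * n := by rw [hk]
        _ = k * (n * g) := by ring
        _ = k := by rw [hn, mul_one]
    exact (irrational_iff_ne_rational r).mp hirr k n (by exact_mod_cast hn0) this


lemma ratio3Case (m : ℝ) (hm : m < 8 / (3 * Real.sqrt 3)) :
    ∃ s : ℝ, m < |Real.cos s - Real.cos (3 * s)| := by
  set c : ℝ := (Real.sqrt 3)⁻¹ with hc
  have h3 : Real.sqrt 3 ^ 2 = 3 := Real.sq_sqrt (by norm_num)
  have hs3 : 1 < Real.sqrt 3 := by nlinarith [Real.sqrt_nonneg 3]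
  have hc0 : 0 < c := by rw [hc]; positivity
  have hc1 : c < 1 := by rw [hc]; exact inv_lt_one_of_one_lt₀ hs3
  refine ⟨Real.arccos c, ?_⟩
  rw [Real.cos_three_mul, Real.cos_arccos (by linarith) (by linarith)]
  have hval : c - (4 * c ^ 3 - 3 * c) = 8 / (3 * Real.sqrt 3) := by
    have hne : Real.sqrt 3 ≠ 0 := by positivity
    rw [hc]
    field_simp
    linear_combination 4 * h3
  rw [hval, abs_of_pos (by positivity)]
  exact hm

lemma oddCase (m : ℝ) (P Q : ℕ) (hP5 : 5 ≤ P) (hQodd : Odd Q)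
    (hcop : Nat.Coprime Q (2 * P)) (hm : m < 1.6) :
    ∃ s : ℝ, m < |Real.cos (Q * s) - Real.cos (P * s)| := by
  have hcopZ : IsCoprime (Q : ℤ) ((2 * P : ℕ) : ℤ) := by
    rw [Int.isCoprime_iff_gcd_eq_one, Int.gcd_natCast_natCast]
    exact hcop
  obtain ⟨u, v, huv⟩ := hcopZ
  have hqu : (Q : ℤ) * u = 1 + 2 * (P:ℤ) * (-v) := by push_cast at huv ⊢; linear_combination huv
  have huodd : Odd u := by
    have h1 : Odd ((Q:ℤ) * u) := ⟨(P:ℤ) * (-v), by linarith [hqu]⟩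
    exact (Int.odd_mul.mp h1).2
  have hP0 : (0:ℝ) < (P:ℝ) := by positivity
  refine ⟨(u : ℝ) * π / (P:ℝ), ?_⟩
  have hquR : (Q:ℝ) * (u:ℝ) = 1 + 2 * (P:ℝ) * (-(v:ℝ)) := by exact_mod_cast hqu
  have e1 : (Q:ℝ) * ((u:ℝ) * π / (P:ℝ)) = π / (P:ℝ) + ((-v : ℤ):ℝ) * (2 * π) := by
    push_cast
    field_simp
    linear_combination hquR
  obtain ⟨w, hw⟩ := huodd
  have e3 : (P:ℝ) * ((u:ℝ) * π / (P:ℝ)) = π + ((w : ℤ):ℝ) * (2 * π) := by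
    rw [hw]; push_cast; field_simp; ring
  rw [e1, e3, Real.cos_add_int_mul_two_pi]
  rw [show π + ((w : ℤ):ℝ) * (2 * π) = ((w : ℤ):ℝ) * (2 * π) + π by ring,
    Real.cos_int_mul_two_pi_add_pi]
  have hb : 1 - (π / (P:ℝ)) ^ 2 / 2 ≤ Real.cos (π / (P:ℝ)) := Real.one_sub_sq_div_two_le_cos
  have hπ : π < 3.15 := Real.pi_lt_d2
  have hπ0 : 0 < π := Real.pi_pos
  have hP5' : (5:ℝ) ≤ (P:ℝ) := by exact_mod_cast hP5
  have h1 : π / (P:ℝ) ≤ 3.15 / 5 := by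
    apply div_le_div₀ (by norm_num) (le_of_lt hπ) (by norm_num) hP5'
  have h0 : 0 ≤ π / (P:ℝ) := by positivity
  rw [abs_of_pos] <;> nlinarith

lemma keyB (m r : ℝ) (hr : 1 < r) (hm : m < 8 / (3 * Real.sqrt 3)) :
    ∃ s : ℝ, m < |Real.cos s - Real.cos (s * r)| := by
  have hm16 : m < 1.6 := lt_trans hm M_lt
  by_cases hirr : Irrational r
  · exact irrCase m r hirr hm16
  · obtain ⟨ξ, hξ⟩ := not_not.mp hirr
    set Q : ℕ := ξ.den with hQdef
    have hQ0 : 0 < Q := ξ.pos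
    have hξ1 : 1 < ξ := by
      have h1 : ((1:ℚ):ℝ) < (ξ:ℝ) := by rw [hξ]; simpa using hr
      exact_mod_cast h1
    have hnum : 0 < ξ.num := Rat.num_pos.mpr (lt_trans zero_lt_one hξ1)
    set P : ℕ := ξ.num.toNat with hPdef
    have hPZ : (P:ℤ) = ξ.num := Int.toNat_of_nonneg (le_of_lt hnum)
    have hQR : (0:ℝ) < (Q:ℝ) := by exact_mod_cast hQ0
    have hrPQ : r = (P:ℝ) / (Q:ℝ) := by
      rw [← hξ, Rat.cast_def]
      congr 1
      · exact_mod_cast hPZ.symm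
    have hQP : Q < P := by
      have h1 : (Q:ℝ) < (P:ℝ) := by
        have := hr
        rw [hrPQ, lt_div_iff₀ hQR] at this
        linarith
      exact_mod_cast h1
    have hcop : Nat.Coprime P Q := by
      have h := ξ.reduced
      have : ξ.num.natAbs = P := by
        have := Int.natAbs_of_nonneg (le_of_lt hnum)
        omega
      rwa [this] at h
    have main : ∃ s : ℝ, m < |Real.cos ((Q:ℝ) * s) - Real.cos ((P:ℝ) * s)| := by
      have evenodd : ∀ A B : ℕ, Even A → Odd B →
          ∃ s : ℝ, m < |Real.cos ((A:ℝ) * s) - Real.cos ((B:ℝ) * s)| ∧ s = π := by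
        intro A B hA hB
        refine ⟨π, ?_, rfl⟩
        obtain ⟨a2, ha2⟩ := hA
        obtain ⟨b2, hb2⟩ := hB
        have c1 : Real.cos ((A:ℝ) * π) = 1 := by
          rw [ha2]; push_cast
          rw [show ((a2:ℝ) + (a2:ℝ)) * π = (a2:ℝ) * (2 * π) by ring, Real.cos_nat_mul_two_pi]
        have c2 : Real.cos ((B:ℝ) * π) = -1 := by
          rw [hb2]; push_cast
          rw [show (2 * (b2:ℝ) + 1) * π = (b2:ℝ) * (2 * π) + π by ring,
            Real.cos_nat_mul_two_pi_add_pi]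
        rw [c1, c2]
        norm_num
        linarith [lt_trans hm16 (by norm_num : (1.6:ℝ) < 2)]
      rcases Nat.even_or_odd P with hPe | hPo
      · have hQo : Odd Q := by
          rcases Nat.even_or_odd Q with hQe | h
          · exfalso
            obtain ⟨a, ha⟩ := hPe
            obtain ⟨b, hb⟩ := hQe
            have h2 : (2:ℕ) ∣ Nat.gcd P Q := Nat.dvd_gcd ⟨a, by omega⟩ ⟨b, by omega⟩
            rw [hcop] at h2
            omega
          · exact h
        obtain ⟨s, hs, _⟩ := evenodd P Q hPe hQo
        exact ⟨s, by rwa [abs_sub_comm]⟩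
      · rcases Nat.even_or_odd Q with hQe | hQo
        · obtain ⟨s, hs, _⟩ := evenodd Q P hQe hPo
          exact ⟨s, hs⟩
        · by_cases hP5 : 5 ≤ P
          · exact oddCase m P Q hP5 hQo
              (Nat.Coprime.mul_right hQo.coprime_two_right hcop.symm) hm16
          · have hP3 : P = 3 := by
              have := Nat.odd_iff.mp hPo
              omega
            have hQ1 : Q = 1 := by
              have := Nat.odd_iff.mp hQo
              omega
            obtain ⟨s, hs⟩ := ratio3Case m hm
            refine ⟨s, ?_⟩
            rw [hP3, hQ1]
            push_cast
            simpa using hs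
    obtain ⟨s, hs⟩ := main
    refine ⟨(Q:ℝ) * s, ?_⟩
    have he : (Q:ℝ) * s * r = (P:ℝ) * s := by
      rw [hrPQ]; field_simp
    rw [he]
    exact hs

theorem stmt_16 (a m : ℝ) (ha : 0 ≤ a) (hm0 : 0 ≤ m) (hm : m < 8 / (3 * Real.sqrt 3)) :
    {b : ℝ | 0 ≤ b ∧ ∀ t : ℝ, |Real.cos (t * a) - Real.cos (t * b)| ≤ m} = {a} := by
  have hm2 : m < 2 := lt_trans (lt_trans hm M_lt) (by norm_num)
  -- general consequence of keyB, symmetric in a b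
  have key : ∀ x y : ℝ, 0 ≤ x → x < y → ∃ t : ℝ, m < |Real.cos (t * x) - Real.cos (t * y)| := by
    intro x y hx hxy
    rcases eq_or_lt_of_le hx with hx0 | hx0
    · -- x = 0, take t = π / y
      refine ⟨Real.pi / y, ?_⟩
      have hy : 0 < y := by linarith
      rw [← hx0]
      simp only [mul_zero, Real.cos_zero]
      rw [div_mul_cancel₀ _ (ne_of_gt hy), Real.cos_pi]
      norm_num [hm2]
    · -- 0 < x < y, use keyB with r = y / x
      have hr : 1 < y / x := (one_lt_div hx0).mpr hxy
      obtain ⟨s, hs⟩ := keyB m (y / x) hr hm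
      refine ⟨s / x, ?_⟩
      have h1 : s / x * x = s := div_mul_cancel₀ _ (ne_of_gt hx0)
      have h2 : s / x * y = s * (y / x) := by ring
      rw [h1, h2]; exact hs
  ext b
  simp only [Set.mem_setOf_eq, Set.mem_singleton_iff]
  constructor
  · rintro ⟨hb, hball⟩
    by_contra hne
    rcases lt_or_gt_of_ne hne with h | h
    · obtain ⟨t, ht⟩ := key b a hb h
      have := hball t
      rw [abs_sub_comm] at this
      linarith
    · obtain ⟨t, ht⟩ := key a b ha h
      have := hball t
      linarith
  · rintro rfl
    exact ⟨ha, fun t => by simp [hm0]⟩
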